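/- Let G=(V,D,B) be a mixed graph and v∈V. If a set W⊆V satisfies the weak half-trek criterion with respect to v, then there exists a set Y⊆V satisfying the half-trek criterion with respect to v such that Y∩htr(v) = W∩htr(v). -/

import Mathlib

open scoped Classical Matrix

/-- A mixed graph `G = (V, D, B)`: a finite vertex set `V`, a set `D` of directed
edges, and a symmetric set `B` of bidirected edges; no self-loops. -/
structure MixedGraph (V : Type*) [Fintype V] [DecidableEq V] where
  D : Finset (V × V)
  B : Finset (V × V)
  B_symm : ∀ v w : V, (v, w) ∈ B → (w, v) ∈ B
  D_irrefl : ∀ v : V, (v, v) ∉ D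
  B_irrefl : ∀ v : V, (v, v) ∉ B

namespace MixedGraph

variable {V : Type*} [Fintype V] [DecidableEq V]

/-- The parents of `v`: nodes `w` with `w → v ∈ D`. -/
def pa (G : MixedGraph V) (v : V) : Finset V :=
  Finset.univ.filter fun w => (w, v) ∈ G.D

/-- The siblings of `v`: nodes `w` with `w ↔ v ∈ B`. -/
def sib (G : MixedGraph V) (v : V) : Finset V :=
  Finset.univ.filter fun w => (w, v) ∈ G.B

/-- A trek: a walk with no colliding arrowheads.  The field `left` lists the nodes of the
left-hand side from top (head) to source (last); `right` lists the nodes of the right-hand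
side from top (head) to target (last); consecutive nodes in each list are joined by directed
edges pointing away from the head.  If `hasBidir` then the two heads are joined by a
bidirected edge, otherwise they coincide (the top node). -/
structure Trek (G : MixedGraph V) where
  left : List V
  right : List V
  left_ne : left ≠ []
  right_ne : right ≠ []
  hasBidir : Bool
  left_chain : left.Chain' fun a b => (a, b) ∈ G.D
  right_chain : right.Chain' fun a b => (a, b) ∈ G.D
  head_cond : if hasBidir then (left.head left_ne, right.head right_ne) ∈ G.B
              else left.head left_ne = right.head right_ne

namespace Trek

variable {G : MixedGraph V}

/-- The source of a trek. -/
def source (π : G.Trek) : V := π.left.getLast π.left_ne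

/-- The target of a trek. -/
def target (π : G.Trek) : V := π.right.getLast π.right_ne

/-- The left-hand side `Left(π)` of a trek, as a set of nodes. -/
def leftSet (π : G.Trek) : Finset V := π.left.toFinset

/-- The right-hand side `Right(π)` of a trek, as a set of nodes. -/
def rightSet (π : G.Trek) : Finset V := π.right.toFinset

/-- A half-trek is a trek whose left-hand side consists of exactly one node. -/
def IsHalfTrek (π : G.Trek) : Prop := π.leftSet.card = 1

/-- The number of directed edges traversed by the trek. -/
def nEdges (π : G.Trek) : ℕ := (π.left.length - 1) + (π.right.length - 1)

end Trek

/-- `htr v`: the set of nodes `w ∉ {v} ∪ sib(v)` reachable from `v` by a half-trek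
containing at least one directed edge. -/
def htr (G : MixedGraph V) (v : V) : Set V :=
  {w | w ≠ v ∧ w ∉ G.sib v ∧
    ∃ π : G.Trek, π.source = v ∧ π.target = w ∧ π.IsHalfTrek ∧ 1 ≤ π.nEdges}

/-- `f` encodes a system of treks from `Y` to `P`: treks with pairwise distinct sources
forming `Y` and pairwise distinct targets forming `P`. -/
def IsTrekSystem (G : MixedGraph V) (Y P : Finset V) (f : V → G.Trek) : Prop :=
  (∀ y ∈ Y, (f y).source = y) ∧
  (Y.image fun y => (f y).target) = P ∧
  ∀ y ∈ Y, ∀ y' ∈ Y, y ≠ y' → (f y).target ≠ (f y').target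

/-- The treks `f y`, `y ∈ Y`, have no sided intersection. -/
def NoSidedIntersection (G : MixedGraph V) (Y : Finset V) (f : V → G.Trek) : Prop :=
  ∀ y ∈ Y, ∀ y' ∈ Y, y ≠ y' →
    Disjoint (f y).leftSet (f y').leftSet ∧ Disjoint (f y).rightSet (f y').rightSet

/-- `Y` satisfies the half-trek criterion with respect to `v`. -/
def SatisfiesHTC (G : MixedGraph V) (v : V) (Y : Finset V) : Prop :=
  Y.card = (G.pa v).card ∧
  (∀ y ∈ Y, y ≠ v ∧ y ∉ G.sib v) ∧
  ∃ f : V → G.Trek, (∀ y ∈ Y, (f y).IsHalfTrek) ∧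
    G.IsTrekSystem Y (G.pa v) f ∧ G.NoSidedIntersection Y f

/-- `Y` satisfies the weak half-trek criterion with respect to `v`. -/
def SatisfiesWeakHTC (G : MixedGraph V) (v : V) (Y : Finset V) : Prop :=
  Y.card = (G.pa v).card ∧
  (∀ y ∈ Y, y ≠ v ∧ y ∉ G.sib v) ∧
  ∃ f : V → G.Trek, (∀ y ∈ Y, y ∈ G.htr v → (f y).IsHalfTrek) ∧
    G.IsTrekSystem Y (G.pa v) f ∧ G.NoSidedIntersection Y f

/-- `G` is HTC-identifiable. -/
def HTCIdentifiable (G : MixedGraph V) : Prop :=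
  ∃ Y : V → Finset V,
    (∀ v, G.SatisfiesHTC v (Y v)) ∧
    ∃ r : V → V → Prop, IsStrictTotalOrder V r ∧
      ∀ v w, w ∈ Y v → w ∈ G.htr v → r w v

/-- `G` is HTC-infinite-to-one. -/
def HTCInfiniteToOne (G : MixedGraph V) : Prop :=
  ∀ Y : V → Finset V,
    (∃ v, ¬ G.SatisfiesHTC v (Y v)) ∨ ∃ v w, v ∈ Y w ∧ w ∈ Y v

/-- `G` is acyclic: no directed cycle can be formed from the edges in `D`. -/
def Acyclic (G : MixedGraph V) : Prop :=
  ∀ v : V, ¬ Relation.TransGen (fun a b => (a, b) ∈ G.D) v v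

/-- `G` is simple: at most one edge between any pair of nodes. -/
def Simple (G : MixedGraph V) : Prop :=
  (∀ e ∈ G.D, e ∉ G.B) ∧ ∀ v w : V, (v, w) ∈ G.D → (w, v) ∉ G.D

/-- `ℝ^D_reg`: real matrices supported on `D` with `I - Λ` invertible. -/
def RDreg (G : MixedGraph V) : Set (Matrix V V ℝ) :=
  {Λ | (∀ v w, (v, w) ∉ G.D → Λ v w = 0) ∧ IsUnit (1 - Λ).det}

/-- `PD(B)`: positive definite symmetric matrices supported on the diagonal and `B`. -/
def PDB (G : MixedGraph V) : Set (Matrix V V ℝ) :=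
  {Ω | Ω.PosDef ∧ ∀ v w, v ≠ w → (v, w) ∉ G.B → Ω v w = 0}

/-- The parameter space `Θ = ℝ^D_reg × PD(B)`. -/
def Theta (G : MixedGraph V) : Set (Matrix V V ℝ × Matrix V V ℝ) :=
  {θ | θ.1 ∈ G.RDreg ∧ θ.2 ∈ G.PDB}

/-- The parametrization `φ(Λ, Ω) = (I-Λ)^{-T} Ω (I-Λ)^{-1}`. -/
noncomputable def phi {R : Type*} [CommRing R] (Λ Ω : Matrix V V R) : Matrix V V R :=
  ((1 - Λ)⁻¹)ᵀ * Ω * (1 - Λ)⁻¹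

/-- Evaluation of a polynomial in the coordinates `λ_vw` (left summand) and `ω_vw`
(right summand) at a parameter point `θ = (Λ, Ω)`. -/
noncomputable def evalParam (θ : Matrix V V ℝ × Matrix V V ℝ)
    (p : MvPolynomial ((V × V) ⊕ (V × V)) ℝ) : ℝ :=
  MvPolynomial.eval (Sum.elim (fun e => θ.1 e.1 e.2) (fun e => θ.2 e.1 e.2)) p

/-- `V₀` is a proper algebraic subset of `Θ`: the intersection with `Θ` of the zero set of a
polynomial in the coordinates that does not vanish identically on `Θ`. -/
def IsProperAlgebraic (G : MixedGraph V)
    (V₀ : Set (Matrix V V ℝ × Matrix V V ℝ)) : Prop :=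
  ∃ p : MvPolynomial ((V × V) ⊕ (V × V)) ℝ,
    (∃ θ ∈ G.Theta, evalParam θ p ≠ 0) ∧
    V₀ = {θ ∈ G.Theta | evalParam θ p = 0}

/-- Evaluation of a polynomial in the entries of a covariance matrix. -/
noncomputable def evalAtCov (S : Matrix V V ℝ) (p : MvPolynomial (V × V) ℝ) : ℝ :=
  MvPolynomial.eval (fun e => S e.1 e.2) p

/-- `G` is rationally identifiable: some rational map `ψ` (each coordinate a quotient of
polynomials in the entries of the covariance matrix) satisfies `ψ ∘ φ_G = id` off a proper
algebraic subset of `Θ`. -/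
def RationallyIdentifiable (G : MixedGraph V) : Prop :=
  ∃ V₀, G.IsProperAlgebraic V₀ ∧
    ∃ p q : ((V × V) ⊕ (V × V)) → MvPolynomial (V × V) ℝ,
      ∀ θ ∈ G.Theta \ V₀,
        (∀ i, evalAtCov (phi θ.1 θ.2) (q i) ≠ 0) ∧
        (∀ v w : V, θ.1 v w * evalAtCov (phi θ.1 θ.2) (q (Sum.inl (v, w)))
            = evalAtCov (phi θ.1 θ.2) (p (Sum.inl (v, w)))) ∧
        (∀ v w : V, θ.2 v w * evalAtCov (phi θ.1 θ.2) (q (Sum.inr (v, w)))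
            = evalAtCov (phi θ.1 θ.2) (p (Sum.inr (v, w))))

/-- `G` is generically identifiable: `φ_G` is injective off a proper algebraic subset. -/
def GenericallyIdentifiable (G : MixedGraph V) : Prop :=
  ∃ V₀, G.IsProperAlgebraic V₀ ∧
    Set.InjOn (fun θ : Matrix V V ℝ × Matrix V V ℝ => phi θ.1 θ.2) (G.Theta \ V₀)

/-- `φ_G` is generically infinite-to-one. -/
def GenInfiniteToOne (G : MixedGraph V) : Prop :=
  ∃ V₀, G.IsProperAlgebraic V₀ ∧
    ∀ θ ∈ G.Theta \ V₀,
      {θ' ∈ G.Theta | phi θ'.1 θ'.2 = phi θ.1 θ.2}.Infinite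

end MixedGraph

namespace MixedGraph

variable {V : Type*} [Fintype V] [DecidableEq V] {G : MixedGraph V}

namespace Trek

lemma left_head_mem (π : G.Trek) : π.left.head π.left_ne ∈ π.leftSet :=
  List.mem_toFinset.mpr (List.head_mem _)

lemma source_mem (π : G.Trek) : π.source ∈ π.leftSet :=
  List.mem_toFinset.mpr (List.getLast_mem _)

lemma head_eq_source_of_halfTrek (π : G.Trek) (h : π.IsHalfTrek) :
    π.left.head π.left_ne = π.source := by
  obtain ⟨x, hx⟩ := Finset.card_eq_one.mp h
  have h1 := π.left_head_mem
  have h2 := π.source_mem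
  rw [hx, Finset.mem_singleton] at h1 h2
  rw [h1, h2]

lemma left_length_one_of_halfTrek (π : G.Trek) (h : π.IsHalfTrek) :
    π.left.length = 1 := by
  cases hl : π.left with
  | nil => exact absurd hl π.left_ne
  | cons a t =>
    cases ht : t with
    | nil => simp [hl, ht]
    | cons b t' =>
      exfalso
      obtain ⟨x, hx⟩ := Finset.card_eq_one.mp h
      have hc := π.left_chain
      rw [hl, ht, List.Chain', List.isChain_cons_cons] at hc
      have ha : a ∈ π.leftSet := by rw [Trek.leftSet, hl, ht]; simp
      have hb : b ∈ π.leftSet := by rw [Trek.leftSet, hl, ht]; simp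
      rw [hx, Finset.mem_singleton] at ha hb
      rw [ha, hb] at hc
      exact G.D_irrefl x hc.1

lemma head_ne_source_length (π : G.Trek)
    (h : π.left.head π.left_ne ≠ π.source) : 2 ≤ π.left.length := by
  by_contra hc
  push_neg at hc
  interval_cases hlen : π.left.length
  · exact π.left_ne (List.length_eq_zero_iff.mp hlen)
  · obtain ⟨a, ha⟩ := List.length_eq_one_iff.mp hlen
    apply h
    simp [Trek.source, ha]

/-- Shorten a trek to the half-trek consisting of its right side. -/
def shorten (π : G.Trek) : G.Trek where
  left := [π.left.head π.left_ne]
  right := π.right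
  left_ne := by simp
  right_ne := π.right_ne
  hasBidir := π.hasBidir
  left_chain := List.isChain_singleton _
  right_chain := π.right_chain
  head_cond := by simpa using π.head_cond

@[simp] lemma shorten_source (π : G.Trek) : π.shorten.source = π.left.head π.left_ne := rfl

@[simp] lemma shorten_target (π : G.Trek) : π.shorten.target = π.target := rfl

@[simp] lemma shorten_leftSet (π : G.Trek) : π.shorten.leftSet = {π.left.head π.left_ne} := by
  simp [shorten, Trek.leftSet]

@[simp] lemma shorten_rightSet (π : G.Trek) : π.shorten.rightSet = π.rightSet := rfl

lemma shorten_isHalfTrek (π : G.Trek) : π.shorten.IsHalfTrek := by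
  simp [Trek.IsHalfTrek]

end Trek

/-- Head of an append with nonempty first part. -/
lemma head_glue {α : Type*} (l₁ l₂ : List α) (h₁ : l₁ ≠ []) (h : l₁ ++ l₂ ≠ []) :
    (l₁ ++ l₂).head h = l₁.head h₁ := by
  cases l₁ with
  | nil => exact absurd rfl h₁
  | cons a t => simp

/-- Last element of gluing two lists along a common node. -/
lemma getLast_glue {α : Type*} (l₁ l₂ : List α) (h₁ : l₁ ≠ []) (h₂ : l₂ ≠ [])
    (hg : l₁.getLast h₁ = l₂.head h₂) (h : l₁ ++ l₂.tail ≠ []) :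
    (l₁ ++ l₂.tail).getLast h = l₂.getLast h₂ := by
  cases l₂ with
  | nil => exact absurd rfl h₂
  | cons a t =>
    cases t with
    | nil =>
      simp only [List.head_cons] at hg
      simp only [List.tail_cons, List.append_nil] at h ⊢
      simp [hg]
    | cons b t' =>
      simp only [List.tail_cons] at h ⊢
      rw [List.getLast_append, List.getLast_cons (by simp)]
      simp

/-- If the head of a trek is `v`, a sibling of `v`, or in `htr v`, then its source is in
`htr v` (provided the source is not `v` nor a sibling of `v`). -/
lemma source_mem_htr_of_head (v : V) (π : G.Trek)
    (hv : π.source ≠ v) (hs : π.source ∉ G.sib v)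
    (h : π.left.head π.left_ne = v ∨ π.left.head π.left_ne ∈ G.sib v ∨
      π.left.head π.left_ne ∈ G.htr v) :
    π.source ∈ G.htr v := by
  refine ⟨hv, hs, ?_⟩
  rcases h with h1 | h2 | h3
  · -- head = v : half-trek [v] ← nothing, right = π.left
    have hlen : 2 ≤ π.left.length := π.head_ne_source_length (by rw [h1]; exact hv.symm)
    refine ⟨⟨[v], π.left, by simp, π.left_ne, false, List.isChain_singleton _, π.left_chain,
      by simpa using h1.symm⟩, rfl, rfl, ?_, ?_⟩
    · simp [Trek.IsHalfTrek, Trek.leftSet]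
    · simp only [Trek.nEdges, List.length_singleton]
      omega
  · -- head ∈ sib v
    have hlen : 2 ≤ π.left.length := π.head_ne_source_length (by
      intro he; rw [he] at h2; exact hs h2)
    have hB : (v, π.left.head π.left_ne) ∈ G.B := by
      apply G.B_symm
      simpa [MixedGraph.sib] using h2
    refine ⟨⟨[v], π.left, by simp, π.left_ne, true, List.isChain_singleton _, π.left_chain,
      by simpa using hB⟩, rfl, rfl, ?_, ?_⟩
    · simp [Trek.IsHalfTrek, Trek.leftSet]
    · simp only [Trek.nEdges, List.length_singleton]
      omega
  · -- head ∈ htr v : extend the half-trek from v to the head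
    obtain ⟨-, -, σ, hσs, hσt, hσh, hσe⟩ := h3
    have hσhead : σ.left.head σ.left_ne = v := by
      rw [σ.head_eq_source_of_halfTrek hσh, hσs]
    have hσlen : σ.left.length = 1 := σ.left_length_one_of_halfTrek hσh
    have hσr : 2 ≤ σ.right.length := by
      have := hσe
      simp only [Trek.nEdges, hσlen] at this
      omega
    have hne : σ.right ++ π.left.tail ≠ [] := fun hc =>
      σ.right_ne (List.append_eq_nil_iff.mp hc).1
    refine ⟨⟨[v], σ.right ++ π.left.tail, by simp, hne, σ.hasBidir,
      List.isChain_singleton _, ?_, ?_⟩, rfl, ?_, ?_, ?_⟩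
    · -- chain
      rw [List.Chain', List.isChain_append]
      refine ⟨σ.right_chain, π.left_chain.tail, ?_⟩
      intro x hx z hz
      rw [List.getLast?_eq_getLast σ.right_ne, Option.mem_some_iff] at hx
      cases htl : π.left.tail with
      | nil => rw [htl] at hz; simp at hz
      | cons z' rest =>
        rw [htl] at hz
        simp only [List.head?_cons, Option.mem_some_iff] at hz
        have hc := π.left_chain
        rw [← List.cons_head_tail π.left_ne, htl, List.Chain', List.isChain_cons_cons] at hc
        rw [← hx, ← hz]
        have he : σ.right.getLast σ.right_ne = π.left.head π.left_ne := hσt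
        rw [he]
        exact hc.1
    · -- head_cond
      have hhead : (σ.right ++ π.left.tail).head hne = σ.right.head σ.right_ne :=
        head_glue _ _ σ.right_ne hne
      have := σ.head_cond
      rw [hσhead] at this
      simpa [hhead] using this
    · -- target
      show (σ.right ++ π.left.tail).getLast hne = π.source
      exact getLast_glue σ.right π.left σ.right_ne π.left_ne hσt hne
    · simp [Trek.IsHalfTrek, Trek.leftSet]
    · simp only [Trek.nEdges, List.length_singleton, List.length_append]
      omega

end MixedGraph


/-- If `W` satisfies the weak half-trek criterion with respect to `v`, then there is a set
`Y` satisfying the half-trek criterion with respect to `v` with `Y ∩ htr(v) = W ∩ htr(v)`. -/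
theorem weak_htc_to_htc {V : Type*} [Fintype V] [DecidableEq V] (G : MixedGraph V)
    (v : V) (W : Finset V) (hW : G.SatisfiesWeakHTC v W) :
    ∃ Y : Finset V, G.SatisfiesHTC v Y ∧ (↑Y ∩ G.htr v : Set V) = ↑W ∩ G.htr v := by
  classical
  obtain ⟨hcard, hmem, f, hhalf, ⟨hsrc, himg, hdist⟩, hnsi⟩ := hW
  set h : V → V := fun y => (f y).left.head (f y).left_ne with hh
  have hinL : ∀ y, h y ∈ (f y).leftSet := fun y => (f y).left_head_mem
  have hinj : Set.InjOn h ↑W := by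
    intro y hy y' hy' he
    by_contra hne
    have hd := (hnsi y hy y' hy' hne).1
    exact (Finset.disjoint_left.mp hd (hinL y)) (he ▸ hinL y')
  have hfix : ∀ y ∈ W, y ∈ G.htr v → h y = y := by
    intro y hy hyh
    rw [hh]
    simp only
    rw [(f y).head_eq_source_of_halfTrek (hhalf y hy hyh), hsrc y hy]
  have hout : ∀ y ∈ W, y ∉ G.htr v → ¬(h y = v ∨ h y ∈ G.sib v ∨ h y ∈ G.htr v) := by
    intro y hy hyh hk
    apply hyh
    have := MixedGraph.source_mem_htr_of_head v (f y)
      (by rw [hsrc y hy]; exact (hmem y hy).1)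
      (by rw [hsrc y hy]; exact (hmem y hy).2) hk
    rwa [hsrc y hy] at this
  set g : V → G.Trek := fun z =>
    if hz : ∃ y ∈ W, h y = z then (f hz.choose).shorten else f z with hg
  have gspec : ∀ z ∈ W.image h, ∃ y ∈ W, h y = z ∧ g z = (f y).shorten := by
    intro z hz
    rw [Finset.mem_image] at hz
    obtain ⟨y, hy, hyz⟩ := hz
    have hex : ∃ y ∈ W, h y = z := ⟨y, hy, hyz⟩
    obtain ⟨hy₀, hy₀z⟩ := hex.choose_spec
    refine ⟨hex.choose, hy₀, hy₀z, ?_⟩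
    rw [hg]
    simp only
    rw [dif_pos hex]
  refine ⟨W.image h, ⟨?_, ?_, ?_⟩, ?_⟩
  · rw [Finset.card_image_of_injOn hinj]
    exact hcard
  · intro z hz
    rw [Finset.mem_image] at hz
    obtain ⟨y, hy, hyz⟩ := hz
    by_cases hyh : y ∈ G.htr v
    · rw [← hyz, hfix y hy hyh]
      exact hmem y hy
    · have := hout y hy hyh
      push_neg at this
      rw [← hyz]
      exact ⟨this.1, this.2.1⟩
  · refine ⟨g, ?_, ⟨?_, ?_, ?_⟩, ?_⟩
    · intro z hz
      obtain ⟨y, hy, hyz, hgz⟩ := gspec z hz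
      rw [hgz]
      exact (f y).shorten_isHalfTrek
    · intro z hz
      obtain ⟨y, hy, hyz, hgz⟩ := gspec z hz
      rw [hgz, MixedGraph.Trek.shorten_source]
      exact hyz
    · rw [← himg]
      apply Finset.Subset.antisymm
      · intro t ht
        rw [Finset.mem_image] at ht ⊢
        obtain ⟨z, hz, hzt⟩ := ht
        obtain ⟨y, hy, hyz, hgz⟩ := gspec z hz
        exact ⟨y, hy, by rw [← hzt, hgz, MixedGraph.Trek.shorten_target]⟩
      · intro t ht
        rw [Finset.mem_image] at ht ⊢
        obtain ⟨y, hy, hyt⟩ := ht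
        have hzmem : h y ∈ W.image h := Finset.mem_image_of_mem h hy
        obtain ⟨y₀, hy₀, hy₀z, hgz⟩ := gspec (h y) hzmem
        have : y₀ = y := hinj hy₀ hy hy₀z
        refine ⟨h y, hzmem, ?_⟩
        rw [hgz, MixedGraph.Trek.shorten_target, this, hyt]
    · intro z hz z' hz' hne
      obtain ⟨y, hy, hyz, hgz⟩ := gspec z hz
      obtain ⟨y', hy', hyz', hgz'⟩ := gspec z' hz'
      have hyy : y ≠ y' := fun he => hne (by rw [← hyz, ← hyz', he])
      rw [hgz, hgz', MixedGraph.Trek.shorten_target, MixedGraph.Trek.shorten_target]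
      exact hdist y hy y' hy' hyy
    · intro z hz z' hz' hne
      obtain ⟨y, hy, hyz, hgz⟩ := gspec z hz
      obtain ⟨y', hy', hyz', hgz'⟩ := gspec z' hz'
      have hyy : y ≠ y' := fun he => hne (by rw [← hyz, ← hyz', he])
      have hd := hnsi y hy y' hy' hyy
      constructor
      · rw [hgz, hgz', MixedGraph.Trek.shorten_leftSet, MixedGraph.Trek.shorten_leftSet]
        exact hd.1.mono (Finset.singleton_subset_iff.mpr (hinL y))
          (Finset.singleton_subset_iff.mpr (hinL y'))
      · rw [hgz, hgz', MixedGraph.Trek.shorten_rightSet, MixedGraph.Trek.shorten_rightSet]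
        exact hd.2
  · ext x
    simp only [Set.mem_inter_iff, Finset.coe_image, Set.mem_image, Finset.mem_coe]
    constructor
    · rintro ⟨⟨y, hy, hyx⟩, hxh⟩
      by_cases hyh : y ∈ G.htr v
      · rw [← hyx, hfix y hy hyh]
        exact ⟨hy, hfix y hy hyh ▸ hyx ▸ hxh⟩
      · exact absurd (Or.inr (Or.inr (hyx ▸ hxh))) (hout y hy hyh)
    · rintro ⟨hxW, hxh⟩
      exact ⟨⟨x, hxW, hfix x hxW hxh⟩, hxh⟩
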